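/- In the Solomon simultaneous-report mechanism, for any F > 0 sufficiently small (specifically F < u_a(C) - u_a(B) and F < u_b(B) - u_b(A)), the strategy profile in which both agents truthfully report the state in the first stage, and in the challenge stage the true mother asserts the true state while the non-mother matches the responder's report, is a subgame perfect equilibrium whose outcome allocates the baby to the true mother with no fines imposed on the equilibrium path. -/
import Mathlib


inductive SolAgent | a | b
deriving DecidableEq

inductive SolOutcome | A | B | C
deriving DecidableEq

inductive SolMsg | α | β
deriving DecidableEq

open SolAgent SolOutcome SolMsg

def SolAgent.other : SolAgent → SolAgent
  | SolAgent.a => SolAgent.b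
  | SolAgent.b => SolAgent.a

/-- Allocation implemented by an agreed report: A if α, B if β. -/
def outcomeOf : SolMsg → SolOutcome
  | SolMsg.α => SolOutcome.A
  | SolMsg.β => SolOutcome.B

/-- A strategy in the two-stage SR mechanism: a first-stage report when proposer,
a first-stage report when responder, and a challenge-stage message as a function of
the responder's first-stage report. -/
structure SolStrategy where
  repP : SolMsg
  repR : SolMsg
  chal : SolMsg → SolMsg

/-- Payoff to agent `i` when the proposer is `P` with challenge strategy `chal`,
given first-stage reports `Mp` (proposer) and `Mr` (responder).  Agreement implements
the agreed allocation with no fines; disagreement fines both `F`, then if the proposer's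
challenge message matches `Mr` the allocation `outcomeOf Mr` is implemented and the
responder's fine is refunded; otherwise `C` is implemented and both keep their fines. -/
def solPayoff (u : SolAgent → SolOutcome → ℝ) (F : ℝ) (P : SolAgent)
    (chal : SolMsg → SolMsg) (i : SolAgent) (Mp Mr : SolMsg) : ℝ :=
  if Mp = Mr then u i (outcomeOf Mr)
  else if chal Mr = Mr then u i (outcomeOf Mr) - (if i = P then F else 0)
  else u i SolOutcome.C - F

/-- Subgame perfect equilibrium: for each possible proposer assignment `P`, the
proposer's challenge message is optimal in every challenge subgame, and each agent's
first-stage report is optimal given the other's report and the challenge continuation. -/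
def SolSPE (u : SolAgent → SolOutcome → ℝ) (F : ℝ) (σ : SolAgent → SolStrategy) : Prop :=
  ∀ P : SolAgent,
    (∀ Mr m : SolMsg,
      (if m = Mr then u P (outcomeOf Mr) - F else u P SolOutcome.C - F) ≤
        (if (σ P).chal Mr = Mr then u P (outcomeOf Mr) - F else u P SolOutcome.C - F)) ∧
    (∀ m : SolMsg,
      solPayoff u F P (σ P).chal P m ((σ P.other).repR) ≤
        solPayoff u F P (σ P).chal P ((σ P).repP) ((σ P.other).repR)) ∧
    (∀ m : SolMsg,
      solPayoff u F P (σ P).chal P.other ((σ P).repP) m ≤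
        solPayoff u F P (σ P).chal P.other ((σ P).repP) ((σ P.other).repR))

/-- with state α (agent `a` the true mother) and `F > 0` sufficiently small
(`F < u a C - u a B` and `F < u b B - u b A`), the profile in which both agents report α
in the first stage (in either role), the true mother always asserts α in the challenge
stage, and the non-mother matches the responder's report, is a subgame perfect
equilibrium; on the equilibrium path the reports agree, the baby is allocated to the
true mother (`A`), and no fines are imposed. -/
theorem solomon_truthful_profile_is_SPE
    (u : SolAgent → SolOutcome → ℝ) (F : ℝ) (hF : 0 < F)
    (haAC : u SolAgent.a SolOutcome.C < u SolAgent.a SolOutcome.A)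
    (haCB : u SolAgent.a SolOutcome.B < u SolAgent.a SolOutcome.C)
    (hbBA : u SolAgent.b SolOutcome.A < u SolAgent.b SolOutcome.B)
    (hbAC : u SolAgent.b SolOutcome.A = u SolAgent.b SolOutcome.C)
    (hFa : F < u SolAgent.a SolOutcome.C - u SolAgent.a SolOutcome.B)
    (hFb : F < u SolAgent.b SolOutcome.B - u SolAgent.b SolOutcome.A)
    (σ : SolAgent → SolStrategy)
    (hσa : σ SolAgent.a = ⟨SolMsg.α, SolMsg.α, fun _ => SolMsg.α⟩)
    (hσb : σ SolAgent.b = ⟨SolMsg.α, SolMsg.α, fun r => r⟩) :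
    SolSPE u F σ ∧
      ∀ P : SolAgent,
        (σ P).repP = (σ P.other).repR ∧
        outcomeOf ((σ P.other).repR) = SolOutcome.A ∧
        ∀ i : SolAgent,
          solPayoff u F P (σ P).chal i ((σ P).repP) ((σ P.other).repR) =
            u i SolOutcome.A := by

  constructor
  · intro P
    refine ⟨?_, ?_, ?_⟩
    · intro Mr m
      cases P <;> cases Mr <;> simp_all [SolStrategy.chal, hσa, hσb, outcomeOf] <;> split <;> simp_all [outcomeOf] <;> linarith
    · intro m
      cases P <;> cases m <;> simp_all [solPayoff, SolAgent.other, outcomeOf, hσa, hσb] <;> linarith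
    · intro m
      cases P <;> cases m <;> simp_all [solPayoff, SolAgent.other, outcomeOf, hσa, hσb] <;> linarith
  · intro P
    cases P <;> refine ⟨by simp [hσa, hσb, SolAgent.other], by simp [hσa, hσb, SolAgent.other, outcomeOf], ?_⟩ <;> intro i <;> cases i <;> simp [solPayoff, hσa, hσb, SolAgent.other, outcomeOf]
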